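/- Suppose that for all real symmetric 3×3 matrices A₁, A₂, A₃, A₄ one has (Σ_{r=1}^4 ‖A_r‖²)² ≥ 2 Σ_{1≤r<s≤4} ‖[A_r,A_s]‖² (the DDVV inequality P(3,4)). Then for every m ≥ 2 and all real symmetric 3×3 matrices A₁, …, A_m one has (Σ_{r=1}^m ‖A_r‖²)² ≥ 2 Σ_{1≤r<s≤m} ‖[A_r,A_s]‖² (the DDVV inequality P(3,m)). -/

import Mathlib

open Matrix BigOperators

/-- Frobenius norm squared of a real `3 × 3` matrix: the sum of the squares of all entries. -/
noncomputable def frobSq (A : Matrix (Fin 3) (Fin 3) ℝ) : ℝ :=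
  ∑ i, ∑ j, (A i j) ^ 2

/-- The commutator `[A, B] = A * B - B * A`. -/
def mcomm (A B : Matrix (Fin 3) (Fin 3) ℝ) : Matrix (Fin 3) (Fin 3) ℝ :=
  A * B - B * A

namespace DDVVaux
open scoped RealInnerProductSpace

abbrev M3 := Matrix (Fin 3) (Fin 3) ℝ
abbrev E6 := EuclideanSpace ℝ (Fin 6)

/-! ### Frobenius inner product -/

noncomputable def ip (A B : M3) : ℝ := ∑ i, ∑ j, A i j * B i j

lemma ip_self (A : M3) : ip A A = frobSq A := by
  simp [ip, frobSq, sq]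

lemma frobSq_nonneg (A : M3) : 0 ≤ frobSq A :=
  Finset.sum_nonneg fun i _ => Finset.sum_nonneg fun j _ => sq_nonneg _

lemma ip_comm (A B : M3) : ip A B = ip B A := by
  simp [ip, mul_comm]

lemma ip_sum_left {ι : Type*} (s : Finset ι) (f : ι → M3) (B : M3) :
    ip (∑ r ∈ s, f r) B = ∑ r ∈ s, ip (f r) B := by
  simp only [ip, Matrix.sum_apply, Finset.sum_mul]
  exact (Finset.sum_congr rfl fun i _ => Finset.sum_comm).trans Finset.sum_comm

lemma ip_sum_right {ι : Type*} (s : Finset ι) (f : ι → M3) (B : M3) :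
    ip B (∑ r ∈ s, f r) = ∑ r ∈ s, ip B (f r) := by
  rw [ip_comm, ip_sum_left]
  simp [ip_comm]

lemma ip_smul_left (c : ℝ) (A B : M3) : ip (c • A) B = c * ip A B := by
  simp [ip, Finset.mul_sum, mul_assoc]

lemma ip_smul_right (c : ℝ) (A B : M3) : ip A (c • B) = c * ip A B := by
  rw [ip_comm, ip_smul_left, ip_comm]

lemma frobSq_neg (A : M3) : frobSq (-A) = frobSq A := by
  simp [frobSq]

lemma mcomm_comm (A B : M3) : mcomm B A = -(mcomm A B) := by
  simp only [mcomm, neg_sub]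

lemma frobSq_mcomm_comm (A B : M3) : frobSq (mcomm A B) = frobSq (mcomm B A) := by
  rw [mcomm_comm, frobSq_neg]

lemma mcomm_self (A : M3) : mcomm A A = 0 := by simp [mcomm]

lemma frobSq_zero : frobSq (0 : M3) = 0 := by simp [frobSq]

lemma mcomm_zero_left (B : M3) : mcomm 0 B = 0 := by simp [mcomm]
lemma mcomm_zero_right (B : M3) : mcomm B 0 = 0 := by simp [mcomm]

lemma mcomm_smul_left (c : ℝ) (A B : M3) : mcomm (c • A) B = c • mcomm A B := by
  simp [mcomm, Matrix.smul_mul, Matrix.mul_smul, smul_sub]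

lemma mcomm_smul_right (c : ℝ) (A B : M3) : mcomm A (c • B) = c • mcomm A B := by
  simp [mcomm, Matrix.smul_mul, Matrix.mul_smul, smul_sub]

lemma mcomm_sum_left {ι : Type*} (s : Finset ι) (f : ι → M3) (B : M3) :
    mcomm (∑ r ∈ s, f r) B = ∑ r ∈ s, mcomm (f r) B := by
  simp [mcomm, Finset.sum_mul, Finset.mul_sum, Finset.sum_sub_distrib]

lemma mcomm_sum_right {ι : Type*} (s : Finset ι) (f : ι → M3) (B : M3) :
    mcomm B (∑ r ∈ s, f r) = ∑ r ∈ s, mcomm B (f r) := by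
  simp [mcomm, Finset.sum_mul, Finset.mul_sum, Finset.sum_sub_distrib]

lemma frobSq_smul (c : ℝ) (A : M3) : frobSq (c • A) = c ^ 2 * frobSq A := by
  simp [frobSq, Finset.mul_sum, mul_pow]

/-! ### vector/matrix entry helpers -/

section vechelp
variable (a b c d e f : ℝ)
@[simp] lemma v6_0 : ![a,b,c,d,e,f] 0 = a := rfl
@[simp] lemma v6_1 : ![a,b,c,d,e,f] 1 = b := rfl
@[simp] lemma v6_2 : ![a,b,c,d,e,f] 2 = c := rfl
@[simp] lemma v6_3 : ![a,b,c,d,e,f] 3 = d := rfl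
@[simp] lemma v6_4 : ![a,b,c,d,e,f] 4 = e := rfl
@[simp] lemma v6_5 : ![a,b,c,d,e,f] 5 = f := rfl
end vechelp

section m3help
variable (a b c d e f g h i : ℝ)
@[simp] lemma m3_00 : !![a,b,c;d,e,f;g,h,i] 0 0 = a := rfl
@[simp] lemma m3_01 : !![a,b,c;d,e,f;g,h,i] 0 1 = b := rfl
@[simp] lemma m3_02 : !![a,b,c;d,e,f;g,h,i] 0 2 = c := rfl
@[simp] lemma m3_10 : !![a,b,c;d,e,f;g,h,i] 1 0 = d := rfl
@[simp] lemma m3_11 : !![a,b,c;d,e,f;g,h,i] 1 1 = e := rfl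
@[simp] lemma m3_12 : !![a,b,c;d,e,f;g,h,i] 1 2 = f := rfl
@[simp] lemma m3_20 : !![a,b,c;d,e,f;g,h,i] 2 0 = g := rfl
@[simp] lemma m3_21 : !![a,b,c;d,e,f;g,h,i] 2 1 = h := rfl
@[simp] lemma m3_22 : !![a,b,c;d,e,f;g,h,i] 2 2 = i := rfl
end m3help

/-! ### the coordinate isomorphism -/

noncomputable def rt2 : ℝ := Real.sqrt 2
lemma rt2_sq : rt2 * rt2 = 2 := Real.mul_self_sqrt (by norm_num)
lemma rt2_ne : rt2 ≠ 0 := by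
  have : (0:ℝ) < rt2 := Real.sqrt_pos.mpr (by norm_num)
  linarith

noncomputable def tv (A : M3) : E6 :=
  WithLp.toLp 2 ![A 0 0, A 1 1, A 2 2, rt2 * A 0 1, rt2 * A 0 2, rt2 * A 1 2]

noncomputable def sv (x : E6) : M3 :=
  !![x 0, rt2⁻¹ * x 3, rt2⁻¹ * x 4;
     rt2⁻¹ * x 3, x 1, rt2⁻¹ * x 5;
     rt2⁻¹ * x 4, rt2⁻¹ * x 5, x 2]

lemma sv_isSymm (x : E6) : (sv x).IsSymm := by
  apply Matrix.IsSymm.ext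
  intro i j
  fin_cases i <;> fin_cases j <;> simp [sv, Matrix.vecHead, Matrix.vecTail]

lemma sv_zero : sv 0 = 0 := by
  ext i j
  fin_cases i <;> fin_cases j <;> simp [sv, Matrix.vecHead, Matrix.vecTail]

lemma sv_add (x y : E6) : sv (x + y) = sv x + sv y := by
  ext i j
  fin_cases i <;> fin_cases j <;> simp [sv, Matrix.vecHead, Matrix.vecTail] <;> ring

lemma sv_smul (c : ℝ) (x : E6) : sv (c • x) = c • sv x := by
  ext i j
  fin_cases i <;> fin_cases j <;> simp [sv, Matrix.vecHead, Matrix.vecTail] <;> ring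

lemma sv_sum {ι : Type*} (s : Finset ι) (f : ι → E6) :
    sv (∑ i ∈ s, f i) = ∑ i ∈ s, sv (f i) := by
  classical
  induction s using Finset.induction_on with
  | empty => simp [sv_zero]
  | insert _ _ h ih => rw [Finset.sum_insert h, Finset.sum_insert h, sv_add, ih]

lemma tv_sv (x : E6) : tv (sv x) = x := by
  ext i
  fin_cases i <;>
    simp [tv, sv, Matrix.vecHead, Matrix.vecTail, ← mul_assoc, mul_inv_cancel₀ rt2_ne]

lemma sv_tv {A : M3} (h : A.IsSymm) : sv (tv A) = A := by
  ext i j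
  fin_cases i <;> fin_cases j <;>
    simp [tv, sv, Matrix.vecHead, Matrix.vecTail, ← mul_assoc, inv_mul_cancel₀ rt2_ne] <;>
    rw [h.apply]

lemma ip_tv {A B : M3} (hA : A.IsSymm) (hB : B.IsSymm) : ⟪tv A, tv B⟫ = ip A B := by
  simp only [PiLp.inner_apply, RCLike.inner_apply, starRingEnd_apply, star_trivial]
  rw [Fin.sum_univ_six]
  simp only [ip, Fin.sum_univ_three, tv]
  simp only [v6_0, v6_1, v6_2, v6_3, v6_4, v6_5]
  rw [hA.apply 0 1, hA.apply 0 2, hA.apply 1 2, hB.apply 0 1, hB.apply 0 2, hB.apply 1 2]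
  linear_combination (A 0 1 * B 0 1 + A 0 2 * B 0 2 + A 1 2 * B 1 2) * rt2_sq

/-! ### the explicit orthonormal basis of Sym(3) -/

noncomputable def e (α : Fin 6) : E6 := EuclideanSpace.single α 1

noncomputable def EE (α : Fin 6) : M3 := sv (e α)

lemma EE0_eq : EE 0 = !![1,0,0;0,0,0;0,0,0] := by
  ext i j; fin_cases i <;> fin_cases j <;>
    simp [EE, sv, e, EuclideanSpace.single_apply]

lemma EE1_eq : EE 1 = !![0,0,0;0,1,0;0,0,0] := by
  ext i j; fin_cases i <;> fin_cases j <;>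
    simp [EE, sv, e, EuclideanSpace.single_apply]

lemma EE2_eq : EE 2 = !![0,0,0;0,0,0;0,0,1] := by
  ext i j; fin_cases i <;> fin_cases j <;>
    simp [EE, sv, e, EuclideanSpace.single_apply]

lemma EE3_eq : EE 3 = rt2⁻¹ • !![0,1,0;1,0,0;0,0,0] := by
  ext i j; fin_cases i <;> fin_cases j <;>
    (simp only [EE, sv, e, Matrix.smul_apply, m3_00, m3_01, m3_02, m3_10, m3_11, m3_12,
      m3_20, m3_21, m3_22, smul_eq_mul, EuclideanSpace.single_apply]) <;>
    norm_num <;>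
    first
      | decide
      | (intro hf; exact absurd hf (by decide))

lemma EE4_eq : EE 4 = rt2⁻¹ • !![0,0,1;0,0,0;1,0,0] := by
  ext i j; fin_cases i <;> fin_cases j <;>
    (simp only [EE, sv, e, Matrix.smul_apply, m3_00, m3_01, m3_02, m3_10, m3_11, m3_12,
      m3_20, m3_21, m3_22, smul_eq_mul, EuclideanSpace.single_apply]) <;>
    norm_num <;>
    first
      | decide
      | (intro hf; exact absurd hf (by decide))

lemma EE5_eq : EE 5 = rt2⁻¹ • !![0,0,0;0,0,1;0,1,0] := by
  ext i j; fin_cases i <;> fin_cases j <;>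
    (simp only [EE, sv, e, Matrix.smul_apply, m3_00, m3_01, m3_02, m3_10, m3_11, m3_12,
      m3_20, m3_21, m3_22, smul_eq_mul, EuclideanSpace.single_apply]) <;>
    norm_num <;>
    first
      | decide
      | (intro hf; exact absurd hf (by decide))

lemma rowsum_EE (X : M3) (hX : X.IsSymm) :
    ∑ α : Fin 6, frobSq (mcomm X (EE α)) ≤ 3 * frobSq X := by
  have h2 : rt2⁻¹ ^ 2 = 1/2 := by
    rw [inv_pow, sq, rt2_sq]; norm_num
  have e10 : X 1 0 = X 0 1 := hX.apply 0 1
  have e20 : X 2 0 = X 0 2 := hX.apply 0 2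
  have e21 : X 2 1 = X 1 2 := hX.apply 1 2
  rw [Fin.sum_univ_six, EE0_eq, EE1_eq, EE2_eq, EE3_eq, EE4_eq, EE5_eq,
    mcomm_smul_right, mcomm_smul_right, mcomm_smul_right,
    frobSq_smul, frobSq_smul, frobSq_smul, h2]
  simp only [mcomm, frobSq, Matrix.sub_apply, Matrix.mul_apply, Fin.sum_univ_three]
  norm_num [Matrix.cons_val_zero, Matrix.cons_val_one, Matrix.head_cons,
    Matrix.cons_val_two, Matrix.cons_val_three, Matrix.vecHead, Matrix.vecTail]
  simp only [e10, e20, e21]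
  nlinarith [sq_nonneg (X 0 0 + X 1 1 + X 2 2)]

/-! ### expansion of sv in the explicit basis -/

lemma sv_eq_sum (x : E6) : sv x = ∑ α : Fin 6, x α • EE α := by
  ext i j
  rw [Matrix.sum_apply, Fin.sum_univ_six]
  simp only [Matrix.smul_apply, EE0_eq, EE1_eq, EE2_eq, EE3_eq, EE4_eq, EE5_eq, smul_eq_mul]
  fin_cases i <;> fin_cases j <;> simp [sv, Matrix.vecHead, Matrix.vecTail] <;> ring

/-! ### transfer of the row sum bound to an arbitrary orthonormal basis -/

lemma sum_coord_onb (b : OrthonormalBasis (Fin 6) ℝ E6) (α β : Fin 6) :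
    ∑ j, (b j) α * (b j) β = if α = β then 1 else 0 := by
  have h := b.sum_inner_mul_inner (e α) (e β)
  simp only [e, EuclideanSpace.inner_single_left, EuclideanSpace.inner_single_right,
    starRingEnd_apply, star_trivial, one_mul, mul_one, EuclideanSpace.single_apply] at h
  rcases eq_or_ne α β with h' | h'
  · subst h'; simpa using h
  · rw [h]; simp [h', h'.symm]

lemma rowsum_onb (b : OrthonormalBasis (Fin 6) ℝ E6) (X : M3) (hX : X.IsSymm) :
    ∑ j, frobSq (mcomm X (sv (b j))) ≤ 3 * frobSq X := by
  have expand : ∀ j, mcomm X (sv (b j)) = ∑ α : Fin 6, (b j) α • mcomm X (EE α) := by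
    intro j
    rw [sv_eq_sum (b j), mcomm_sum_right]
    exact Finset.sum_congr rfl fun α _ => mcomm_smul_right _ _ _
  have hj : ∀ j, frobSq (mcomm X (sv (b j))) =
      ∑ α : Fin 6, ∑ β : Fin 6, (b j) α * (b j) β * ip (mcomm X (EE α)) (mcomm X (EE β)) := by
    intro j
    rw [← ip_self, expand j, ip_sum_left]
    refine Finset.sum_congr rfl fun α _ => ?_
    rw [ip_smul_left, ip_sum_right, Finset.mul_sum]
    refine Finset.sum_congr rfl fun β _ => ?_
    rw [ip_smul_right]; ring
  calc ∑ j, frobSq (mcomm X (sv (b j)))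
      = ∑ j, ∑ α : Fin 6, ∑ β : Fin 6,
          (b j) α * (b j) β * ip (mcomm X (EE α)) (mcomm X (EE β)) :=
        Finset.sum_congr rfl fun j _ => hj j
    _ = ∑ α : Fin 6, ∑ β : Fin 6,
          (∑ j, (b j) α * (b j) β) * ip (mcomm X (EE α)) (mcomm X (EE β)) := by
        rw [Finset.sum_comm]
        refine Finset.sum_congr rfl fun α _ => ?_
        rw [Finset.sum_comm]
        refine Finset.sum_congr rfl fun β _ => ?_
        rw [Finset.sum_mul]
    _ = ∑ α : Fin 6, frobSq (mcomm X (EE α)) := by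
        refine Finset.sum_congr rfl fun α _ => ?_
        simp only [sum_coord_onb b, ite_mul, one_mul, zero_mul, Finset.sum_ite_eq,
          Finset.mem_univ, if_true]
        exact ip_self _
    _ ≤ 3 * frobSq X := rowsum_EE X hX

/-! ### the scalar combinatorial lemma -/

lemma lp_lemma (μ : Fin 6 → ℝ) (cc : Fin 6 → Fin 6 → ℝ)
    (hμ : ∀ i, 0 ≤ μ i) (hsym : ∀ i j, cc i j = cc j i) (hdiag : ∀ i, cc i i = 0)
    (h0 : ∀ i j, 0 ≤ cc i j) (h2 : ∀ i j, cc i j ≤ 2)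
    (hrow : ∀ i, ∑ j, cc i j ≤ 3) :
    ∑ i, ∑ j, μ i * μ j * cc i j ≤ (∑ i, μ i) ^ 2 := by
  classical
  set dp : Fin 6 → Fin 6 → ℝ := fun i j => if i = j then 0 else max (cc i j - 1) 0 with hdp
  have dp_nonneg : ∀ i j, 0 ≤ dp i j := by
    intro i j
    by_cases h : i = j <;> simp [hdp, h, le_max_right]
  have dp_symm : ∀ i j, dp i j = dp j i := by
    intro i j
    by_cases h : i = j
    · simp [hdp, h]
    · simp [hdp, h, Ne.symm h, hsym i j]
  -- row sums of the positive part are at most 1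
  have rowbound : ∀ i, ∑ j, dp i j ≤ 1 := by
    intro i
    have hii : dp i i = 0 := by simp [hdp]
    rw [← Finset.sum_erase _ hii]
    set u : Finset (Fin 6) := Finset.univ.erase i with hu
    have husum : ∀ j ∈ u, dp i j = max (cc i j - 1) 0 := by
      intro j hj
      have : j ≠ i := Finset.ne_of_mem_erase hj
      simp [hdp, Ne.symm this]
    rw [Finset.sum_congr rfl husum]
    have hcard : u.card = 5 := by
      rw [hu, Finset.card_erase_of_mem (Finset.mem_univ i)]
      simp
    have hrowu : ∑ j ∈ u, cc i j ≤ 3 := by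
      have : ∑ j ∈ u, cc i j = ∑ j, cc i j := Finset.sum_erase _ (hdiag i)
      rw [this]; exact hrow i
    by_cases hex : ∃ j₁ ∈ u, ∃ j₂ ∈ u, j₁ ≠ j₂ ∧ 1 < cc i j₁ ∧ 1 < cc i j₂
    · obtain ⟨j₁, hj₁, j₂, hj₂, hne, hc₁, hc₂⟩ := hex
      have hsplit : ∀ j ∈ u, max (cc i j - 1) 0 = (cc i j - 1) + max (1 - cc i j) 0 := by
        intro j _
        rcases le_total (cc i j) 1 with h | h
        · rw [max_eq_right (by linarith), max_eq_left (by linarith)]; ring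
        · rw [max_eq_left (by linarith), max_eq_right (by linarith)]; ring
      rw [Finset.sum_congr rfl hsplit, Finset.sum_add_distrib]
      have h1 : ∑ j ∈ u, (cc i j - 1) ≤ -2 := by
        rw [Finset.sum_sub_distrib, Finset.sum_const, hcard]
        simp only [nsmul_eq_mul]
        push_cast
        linarith
      have h2' : ∑ j ∈ u, max (1 - cc i j) 0 ≤ 3 := by
        have hpt : ∀ j ∈ u, max (1 - cc i j) 0 ≤
            1 - (if j = j₁ then (1:ℝ) else 0) - (if j = j₂ then (1:ℝ) else 0) := by
          intro j _
          by_cases e1 : j = j₁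
          · subst e1
            rw [if_pos rfl, if_neg hne]
            rw [max_eq_right (by linarith)]
            norm_num
          · by_cases e2 : j = j₂
            · subst e2
              rw [if_neg e1, if_pos rfl]
              rw [max_eq_right (by linarith)]
              norm_num
            · rw [if_neg e1, if_neg e2]
              have := h0 i j
              exact max_le (by linarith) (by norm_num)
        calc ∑ j ∈ u, max (1 - cc i j) 0
            ≤ ∑ j ∈ u, (1 - (if j = j₁ then (1:ℝ) else 0) - (if j = j₂ then (1:ℝ) else 0)) :=
              Finset.sum_le_sum hpt
          _ = 3 := by
              rw [Finset.sum_sub_distrib, Finset.sum_sub_distrib, Finset.sum_const, hcard]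
              rw [Finset.sum_ite_eq' u j₁ (fun _ => (1:ℝ)), Finset.sum_ite_eq' u j₂ (fun _ => (1:ℝ))]
              rw [if_pos hj₁, if_pos hj₂]
              norm_num
      linarith
    · push_neg at hex
      by_cases hone : ∃ j₀ ∈ u, 1 < cc i j₀
      · obtain ⟨j₀, hj₀, hcj₀⟩ := hone
        have hz : ∀ j ∈ u, j ≠ j₀ → max (cc i j - 1) 0 = 0 := by
          intro j hj hne'
          have hle : cc i j ≤ 1 := hex j₀ hj₀ j hj (Ne.symm hne') hcj₀
          rw [max_eq_right (by linarith)]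
        rw [Finset.sum_eq_single_of_mem j₀ hj₀ hz]
        exact max_le (by linarith [h2 i j₀]) (by norm_num)
      · push_neg at hone
        have : ∀ j ∈ u, max (cc i j - 1) 0 = 0 := by
          intro j hj
          rw [max_eq_right (by linarith [hone j hj])]
        rw [Finset.sum_eq_zero this]
        norm_num
  -- pointwise estimate
  have key : ∀ i j, μ i * μ j - μ i * μ j * cc i j ≥
      (if i = j then μ i ^ 2 else 0) - dp i j * (μ i ^ 2 + μ j ^ 2) / 2 := by
    intro i j
    by_cases h : i = j
    · subst h
      simp [hdiag i, hdp, sq]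
    · have hd : cc i j - 1 ≤ dp i j := by
        simp only [hdp, if_neg h]
        exact le_max_left _ _
      have hdn := dp_nonneg i j
      have hμμ : 0 ≤ μ i * μ j := mul_nonneg (hμ i) (hμ j)
      rw [if_neg h]
      nlinarith [sq_nonneg (μ i - μ j), sq_nonneg (μ i + μ j)]
  -- sum everything
  have sqexp : (∑ i, μ i) ^ 2 = ∑ i, ∑ j, μ i * μ j := by
    rw [sq, Finset.sum_mul_sum]
  have dpsum : ∑ i, ∑ j, dp i j * (μ i ^ 2 + μ j ^ 2) / 2 ≤ ∑ i, μ i ^ 2 := by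
    have expand : ∀ i, ∀ j, dp i j * (μ i ^ 2 + μ j ^ 2) / 2
        = dp i j * μ i ^ 2 / 2 + dp i j * μ j ^ 2 / 2 := by
      intro i j; ring
    have e1 : ∑ i, ∑ j, dp i j * (μ i ^ 2 + μ j ^ 2) / 2
        = (∑ i, ∑ j, dp i j * μ i ^ 2 / 2) + ∑ i, ∑ j, dp i j * μ j ^ 2 / 2 := by
      rw [← Finset.sum_add_distrib]
      refine Finset.sum_congr rfl fun i _ => ?_
      rw [← Finset.sum_add_distrib]
      exact Finset.sum_congr rfl fun j _ => expand i j
    have e2 : ∑ i, ∑ j, dp i j * μ j ^ 2 / 2 = ∑ i, ∑ j, dp i j * μ i ^ 2 / 2 := by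
      rw [Finset.sum_comm]
      refine Finset.sum_congr rfl fun i _ => Finset.sum_congr rfl fun j _ => ?_
      rw [dp_symm]
    have e3 : ∑ i, ∑ j, dp i j * μ i ^ 2 / 2 = ∑ i, (μ i ^ 2 / 2) * ∑ j, dp i j := by
      refine Finset.sum_congr rfl fun i _ => ?_
      rw [Finset.mul_sum]
      exact Finset.sum_congr rfl fun j _ => by ring
    have e4 : ∑ i, (μ i ^ 2 / 2) * (∑ j, dp i j) ≤ ∑ i, μ i ^ 2 / 2 := by
      refine Finset.sum_le_sum fun i _ => ?_
      have h1 := rowbound i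
      have h2'' : (0:ℝ) ≤ μ i ^ 2 / 2 := by positivity
      nlinarith
    rw [e1, e2, e3]
    have : ∑ i, μ i ^ 2 / 2 + ∑ i, μ i ^ 2 / 2 = ∑ i, μ i ^ 2 := by
      rw [← Finset.sum_add_distrib]
      exact Finset.sum_congr rfl fun i _ => by ring
    linarith
  have diagsum : ∑ i, ∑ j, (if i = j then μ i ^ 2 else 0) = ∑ i, μ i ^ 2 := by
    refine Finset.sum_congr rfl fun i _ => ?_
    simp [Finset.sum_ite_eq]
  have total : ∑ i, ∑ j, (μ i * μ j - μ i * μ j * cc i j)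
      ≥ ∑ i, ∑ j, ((if i = j then μ i ^ 2 else 0) - dp i j * (μ i ^ 2 + μ j ^ 2) / 2) :=
    Finset.sum_le_sum fun i _ => Finset.sum_le_sum fun j _ => key i j
  have lhs_eq : ∑ i, ∑ j, (μ i * μ j - μ i * μ j * cc i j)
      = (∑ i, ∑ j, μ i * μ j) - ∑ i, ∑ j, μ i * μ j * cc i j := by
    rw [← Finset.sum_sub_distrib]
    exact Finset.sum_congr rfl fun i _ => by rw [← Finset.sum_sub_distrib]
  have rhs_eq : ∑ i, ∑ j, ((if i = j then μ i ^ 2 else 0) - dp i j * (μ i ^ 2 + μ j ^ 2) / 2)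
      = (∑ i, ∑ j, (if i = j then μ i ^ 2 else 0)) - ∑ i, ∑ j, dp i j * (μ i ^ 2 + μ j ^ 2) / 2 := by
    rw [← Finset.sum_sub_distrib]
    exact Finset.sum_congr rfl fun i _ => by rw [← Finset.sum_sub_distrib]
  rw [lhs_eq, rhs_eq, diagsum] at total
  rw [sqexp]
  linarith

/-! ### the main estimate -/

theorem main {m : ℕ} (A : Fin m → M3) (hA : ∀ r, (A r).IsSymm)
    (hcap : ∀ X Y : M3, X.IsSymm → Y.IsSymm → frobSq X = 1 → frobSq Y = 1 →
      ip X Y = 0 → frobSq (mcomm X Y) ≤ 2) :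
    ∑ r, ∑ s, frobSq (mcomm (A r) (A s)) ≤ (∑ r, frobSq (A r)) ^ 2 := by
  classical
  set a : Fin m → E6 := fun r => tv (A r) with ha
  set T : E6 →ₗ[ℝ] E6 :=
    { toFun := fun x => ∑ r, ⟪a r, x⟫ • a r
      map_add' := by
        intro x y
        simp only [inner_add_right, add_smul]
        rw [Finset.sum_add_distrib]
      map_smul' := by
        intro cx x
        simp only [inner_smul_right, RingHom.id_apply, Finset.smul_sum, smul_smul] } with hT
  have hTsym : T.IsSymmetric := by
    intro x y
    simp only [hT, LinearMap.coe_mk, AddHom.coe_mk, sum_inner, real_inner_smul_left,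
      inner_sum, real_inner_smul_right]
    refine Finset.sum_congr rfl fun r _ => ?_
    rw [real_inner_comm x (a r)]
    ring
  have hrank : Module.finrank ℝ E6 = 6 := finrank_euclideanSpace_fin
  set b := hTsym.eigenvectorBasis hrank with hb
  set μ := hTsym.eigenvalues hrank with hμdef
  set v : Fin 6 → M3 := fun i => sv (b i) with hv
  set c : Fin m → Fin 6 → ℝ := fun r i => ⟪b i, a r⟫ with hc
  have hvsymm : ∀ i, (v i).IsSymm := fun i => sv_isSymm _
  have hvip : ∀ i j, ip (v i) (v j) = if i = j then 1 else 0 := by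
    intro i j
    rw [← ip_tv (hvsymm i) (hvsymm j)]
    simp only [hv]
    rw [tv_sv, tv_sv]
    exact orthonormal_iff_ite.mp b.orthonormal i j
  have hexpand : ∀ r, A r = ∑ i, c r i • v i := by
    intro r
    have h1 : A r = sv (a r) := by rw [ha]; exact (sv_tv (hA r)).symm
    rw [h1, ← b.sum_repr' (a r), sv_sum]
    refine Finset.sum_congr rfl fun i _ => ?_
    rw [sv_smul]
  have hm : ∀ i j, (∑ r, c r i * c r j) = if i = j then μ i else 0 := by
    intro i j
    have h1 : ⟪T (b i), b j⟫ = ∑ r, c r i * c r j := by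
      simp only [hT, LinearMap.coe_mk, AddHom.coe_mk, sum_inner, real_inner_smul_left]
      refine Finset.sum_congr rfl fun r _ => ?_
      rw [hc]
      simp only
      rw [real_inner_comm (a r) (b i), real_inner_comm (a r) (b j)]
    have h2 : ⟪T (b i), b j⟫ = μ i * ⟪b i, b j⟫ := by
      rw [hb, hμdef, hTsym.apply_eigenvectorBasis, real_inner_smul_left]
      norm_num
    rw [← h1, h2, orthonormal_iff_ite.mp b.orthonormal i j]
    by_cases h : i = j <;> simp [h]
  have hμpos : ∀ i, 0 ≤ μ i := by
    intro i
    have h := hm i i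
    rw [if_pos rfl] at h
    rw [← h]
    exact Finset.sum_nonneg fun r _ => mul_self_nonneg _
  -- the norm identity
  have hS : ∑ r, frobSq (A r) = ∑ i, μ i := by
    have h1 : ∀ r, frobSq (A r) = ∑ i, c r i * c r i := by
      intro r
      rw [← ip_self, hexpand r, ip_sum_left]
      refine Finset.sum_congr rfl fun i _ => ?_
      rw [ip_smul_left, ip_sum_right, Finset.mul_sum]
      rw [Finset.sum_eq_single_of_mem i (Finset.mem_univ i)]
      · rw [ip_smul_right, hvip i i, if_pos rfl]; ring
      · intro j _ hji
        rw [ip_smul_right, hvip i j, if_neg (Ne.symm hji)]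
        ring
    rw [Finset.sum_congr rfl fun r _ => h1 r, Finset.sum_comm]
    refine Finset.sum_congr rfl fun i _ => ?_
    rw [hm i i, if_pos rfl]
  -- the commutator identity
  set W : Fin 6 × Fin 6 → M3 := fun p => mcomm (v p.1) (v p.2) with hW
  set d : Fin m → Fin m → Fin 6 × Fin 6 → ℝ := fun r s p => c r p.1 * c s p.2 with hd
  have hmc : ∀ r s, mcomm (A r) (A s) = ∑ p : Fin 6 × Fin 6, d r s p • W p := by
    intro r s
    conv_lhs => rw [hexpand r, hexpand s]
    rw [mcomm_sum_left, ← Finset.univ_product_univ, Finset.sum_product]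
    refine Finset.sum_congr rfl fun i _ => ?_
    rw [mcomm_smul_left, mcomm_sum_right, Finset.smul_sum]
    refine Finset.sum_congr rfl fun j _ => ?_
    rw [mcomm_smul_right, smul_smul]
  have hfs : ∀ r s, frobSq (mcomm (A r) (A s)) =
      ∑ p : Fin 6 × Fin 6, ∑ q : Fin 6 × Fin 6, d r s p * d r s q * ip (W p) (W q) := by
    intro r s
    rw [← ip_self, hmc r s, ip_sum_left]
    refine Finset.sum_congr rfl fun p _ => ?_
    rw [ip_smul_left, ip_sum_right, Finset.mul_sum]
    refine Finset.sum_congr rfl fun q _ => ?_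
    rw [ip_smul_right]
    ring
  have key2 : ∀ p q : Fin 6 × Fin 6, (∑ r, ∑ s, d r s p * d r s q)
      = (if p.1 = q.1 then μ p.1 else 0) * (if p.2 = q.2 then μ p.2 else 0) := by
    intro p q
    have h1 : ∀ r, (∑ s, d r s p * d r s q) = (c r p.1 * c r q.1) * ∑ s, c s p.2 * c s q.2 := by
      intro r
      rw [Finset.mul_sum]
      refine Finset.sum_congr rfl fun s _ => ?_
      simp only [hd]
      ring
    rw [Finset.sum_congr rfl fun r _ => h1 r, ← Finset.sum_mul, hm, hm]
  have hC : ∑ r, ∑ s, frobSq (mcomm (A r) (A s))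
      = ∑ i, ∑ j, μ i * μ j * frobSq (mcomm (v i) (v j)) := by
    calc ∑ r, ∑ s, frobSq (mcomm (A r) (A s))
        = ∑ r, ∑ s, ∑ p : Fin 6 × Fin 6, ∑ q : Fin 6 × Fin 6,
            d r s p * d r s q * ip (W p) (W q) :=
          Finset.sum_congr rfl fun r _ => Finset.sum_congr rfl fun s _ => hfs r s
      _ = ∑ p : Fin 6 × Fin 6, ∑ q : Fin 6 × Fin 6, (∑ r, ∑ s, d r s p * d r s q) * ip (W p) (W q) := by
          have step1 : ∀ r : Fin m, ∑ s, ∑ p : Fin 6 × Fin 6, ∑ q : Fin 6 × Fin 6,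
              d r s p * d r s q * ip (W p) (W q)
              = ∑ p : Fin 6 × Fin 6, ∑ s, ∑ q : Fin 6 × Fin 6,
                d r s p * d r s q * ip (W p) (W q) := fun r => Finset.sum_comm
          rw [Finset.sum_congr rfl fun r _ => step1 r, Finset.sum_comm]
          refine Finset.sum_congr rfl fun p _ => ?_
          have step2 : ∀ r : Fin m, ∑ s, ∑ q : Fin 6 × Fin 6, d r s p * d r s q * ip (W p) (W q)
              = ∑ q : Fin 6 × Fin 6, ∑ s, d r s p * d r s q * ip (W p) (W q) :=
            fun r => Finset.sum_comm
          rw [Finset.sum_congr rfl fun r _ => step2 r, Finset.sum_comm]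
          refine Finset.sum_congr rfl fun q _ => ?_
          rw [Finset.sum_mul]
          refine Finset.sum_congr rfl fun r _ => ?_
          rw [Finset.sum_mul]
      _ = ∑ p : Fin 6 × Fin 6, ∑ q : Fin 6 × Fin 6,
            ((if p.1 = q.1 then μ p.1 else 0) * (if p.2 = q.2 then μ p.2 else 0)) * ip (W p) (W q) := by
          refine Finset.sum_congr rfl fun p _ => Finset.sum_congr rfl fun q _ => ?_
          rw [key2]
      _ = ∑ p : Fin 6 × Fin 6, μ p.1 * μ p.2 * frobSq (W p) := by
          refine Finset.sum_congr rfl fun p _ => ?_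
          rw [← Finset.univ_product_univ, Finset.sum_product]
          simp only [ite_mul, zero_mul, mul_ite, mul_zero, Finset.sum_ite_eq,
            Finset.mem_univ, if_true]
          rw [← ip_self]
      _ = ∑ i, ∑ j, μ i * μ j * frobSq (mcomm (v i) (v j)) := by
          rw [← Finset.univ_product_univ, Finset.sum_product]
  -- apply the combinatorial lemma
  set cc : Fin 6 → Fin 6 → ℝ := fun i j => frobSq (mcomm (v i) (v j)) with hcc
  have final : ∑ i, ∑ j, μ i * μ j * cc i j ≤ (∑ i, μ i) ^ 2 := by
    apply lp_lemma μ cc hμpos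
    · intro i j
      exact frobSq_mcomm_comm _ _
    · intro i
      rw [hcc]
      simp only
      rw [mcomm_self, frobSq_zero]
    · intro i j
      exact frobSq_nonneg _
    · intro i j
      by_cases h : i = j
      · subst h
        rw [hcc]
        simp only
        rw [mcomm_self, frobSq_zero]
        norm_num
      · have h1 : frobSq (v i) = 1 := by rw [← ip_self, hvip i i, if_pos rfl]
        have h2 : frobSq (v j) = 1 := by rw [← ip_self, hvip j j, if_pos rfl]
        have h3 : ip (v i) (v j) = 0 := by rw [hvip i j, if_neg h]
        exact hcap (v i) (v j) (hvsymm i) (hvsymm j) h1 h2 h3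
    · intro i
      have h1 : frobSq (v i) = 1 := by rw [← ip_self, hvip i i, if_pos rfl]
      have := rowsum_onb b (v i) (hvsymm i)
      rw [h1, mul_one] at this
      exact this
  rw [hS, hC]
  exact final

end DDVVaux

/-- If `P(3,4)` holds, then `P(3,m)` holds for every `m ≥ 2`. -/
theorem ddvv_P_3_4_implies_P_3_m
    (hP : ∀ A : Fin 4 → Matrix (Fin 3) (Fin 3) ℝ, (∀ r, (A r).IsSymm) →
      (∑ r, frobSq (A r)) ^ 2 ≥
        2 * ∑ r, ∑ s, (if r < s then frobSq (mcomm (A r) (A s)) else 0)) :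
    ∀ m : ℕ, 2 ≤ m → ∀ A : Fin m → Matrix (Fin 3) (Fin 3) ℝ, (∀ r, (A r).IsSymm) →
      (∑ r, frobSq (A r)) ^ 2 ≥
        2 * ∑ r, ∑ s, (if r < s then frobSq (mcomm (A r) (A s)) else 0) := by
  intro m _ A hA
  -- the cap: commutator of two orthonormal symmetric matrices has `frobSq ≤ 2`
  have hcap : ∀ X Y : DDVVaux.M3, X.IsSymm → Y.IsSymm → frobSq X = 1 → frobSq Y = 1 →
      DDVVaux.ip X Y = 0 → frobSq (mcomm X Y) ≤ 2 := by
    intro X Y hX hY hnX hnY _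
    have hsymm4 : ∀ r : Fin 4, ((![X, Y, 0, 0] : Fin 4 → DDVVaux.M3) r).IsSymm := by
      intro r
      fin_cases r
      · exact hX
      · exact hY
      · simp [Matrix.IsSymm]
      · simp [Matrix.IsSymm]
    have h := hP ![X, Y, 0, 0] hsymm4
    have hnn : ∀ r s : Fin 4,
        0 ≤ (if r < s then frobSq (mcomm ((![X, Y, 0, 0]) r) ((![X, Y, 0, 0]) s)) else 0) := by
      intro r s
      split
      · exact DDVVaux.frobSq_nonneg _
      · exact le_refl 0
    have h2 : (if (0 : Fin 4) < (1 : Fin 4)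
        then frobSq (mcomm ((![X, Y, 0, 0]) 0) ((![X, Y, 0, 0]) 1)) else 0)
        = frobSq (mcomm X Y) := by
      rw [if_pos (by decide)]
      rfl
    have h1 : frobSq (mcomm X Y) ≤
        ∑ s : Fin 4, (if (0 : Fin 4) < s
          then frobSq (mcomm ((![X, Y, 0, 0]) 0) ((![X, Y, 0, 0]) s)) else 0) := by
      rw [← h2]
      exact Finset.single_le_sum (fun s _ => hnn 0 s) (Finset.mem_univ (1 : Fin 4))
    have hterm : frobSq (mcomm X Y) ≤
        ∑ r : Fin 4, ∑ s : Fin 4,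
          (if r < s then frobSq (mcomm ((![X, Y, 0, 0]) r) ((![X, Y, 0, 0]) s)) else 0) :=
      le_trans h1 (Finset.single_le_sum
        (fun r _ => Finset.sum_nonneg fun s _ => hnn r s) (Finset.mem_univ (0 : Fin 4)))
    have hL : ∑ r : Fin 4, frobSq ((![X, Y, 0, 0]) r) = 2 := by
      rw [Fin.sum_univ_four]
      show frobSq X + frobSq Y + frobSq 0 + frobSq 0 = 2
      rw [hnX, hnY, DDVVaux.frobSq_zero]
      norm_num
    rw [hL] at h
    nlinarith [hterm, h]
  have hdiag0 : ∀ r : Fin m, frobSq (mcomm (A r) (A r)) = 0 := fun r => by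
    rw [DDVVaux.mcomm_self, DDVVaux.frobSq_zero]
  have hpt : ∀ r s : Fin m, frobSq (mcomm (A r) (A s)) =
      (if r < s then frobSq (mcomm (A r) (A s)) else 0)
        + (if s < r then frobSq (mcomm (A r) (A s)) else 0) := by
    intro r s
    rcases lt_trichotomy r s with h | h | h
    · rw [if_pos h, if_neg (asymm h), add_zero]
    · subst h
      rw [if_neg (lt_irrefl r), hdiag0 r]
      norm_num
    · rw [if_neg (asymm h), if_pos h, zero_add]
  have hfull : ∑ r, ∑ s, frobSq (mcomm (A r) (A s)) =
      2 * ∑ r, ∑ s, (if r < s then frobSq (mcomm (A r) (A s)) else 0) := by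
    calc ∑ r, ∑ s, frobSq (mcomm (A r) (A s))
        = ∑ r, ∑ s, ((if r < s then frobSq (mcomm (A r) (A s)) else 0)
            + (if s < r then frobSq (mcomm (A r) (A s)) else 0)) :=
          Finset.sum_congr rfl fun r _ => Finset.sum_congr rfl fun s _ => hpt r s
      _ = (∑ r, ∑ s, (if r < s then frobSq (mcomm (A r) (A s)) else 0))
            + ∑ r, ∑ s, (if s < r then frobSq (mcomm (A r) (A s)) else 0) := by
          rw [← Finset.sum_add_distrib]
          exact Finset.sum_congr rfl fun r _ => by rw [← Finset.sum_add_distrib]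
      _ = 2 * ∑ r, ∑ s, (if r < s then frobSq (mcomm (A r) (A s)) else 0) := by
          have hsw : ∑ r, ∑ s, (if s < r then frobSq (mcomm (A r) (A s)) else 0)
              = ∑ r, ∑ s, (if r < s then frobSq (mcomm (A r) (A s)) else 0) := by
            rw [Finset.sum_comm]
            refine Finset.sum_congr rfl fun r _ => Finset.sum_congr rfl fun s _ => ?_
            rw [DDVVaux.frobSq_mcomm_comm]
          rw [hsw]
          ring
  have hmain := DDVVaux.main A hA hcap
  rw [ge_iff_le, ← hfull]
  exact hmain
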